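/- Let (A,B) be controllable with A ∈ ℝ^{n×n}, B ∈ ℝ^{n×m} of full column rank m, and let λ ∈ ℝ. If X_a ∈ ℝ^{n×a} with a ≤ m has orthonormal columns all lying in the null space of Q₂ᵀ(A - λIₙ) (where the columns of Q₂ span the orthogonal complement of range(B)), then for F = R⁻¹Q₁ᵀ(XTXᵀ - A) constructed with any orthogonal completion X = [X_a, X'] and any upper quasi-triangular T with T(1:a,1:a) = λI_a satisfying Q₂ᵀ(AX - XT) = 0, the geometric multiplicity of λ as an eigenvalue of A + BF is at least a. -/

import Mathlib

open Matrix

/-- If the first `a ≤ m` columns of `X` are orthonormal vectors in the null space of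
`Q₂ᵀ(A - λI)` and `T(1:a,1:a) = λI_a` (with zeros below/above in those columns), then
`λ` has geometric multiplicity at least `a` as an eigenvalue of `A + BF`. -/
theorem stmt19 (n m p a : ℕ) (hmp : m + p = n) (ham : a ≤ m) (han : a ≤ n)
    (A : Matrix (Fin n) (Fin n) ℝ) (B : Matrix (Fin n) (Fin m) ℝ)
    (hctrb : (Matrix.of fun (i : Fin n) (q : Fin n × Fin m) =>
      (A ^ (q.1 : ℕ) * B) i q.2).rank = n)
    (Q₁ : Matrix (Fin n) (Fin m) ℝ) (Q₂ : Matrix (Fin n) (Fin p) ℝ)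
    (R : Matrix (Fin m) (Fin m) ℝ) (hR : IsUnit R.det)
    (hQ : (Matrix.fromCols Q₁ Q₂)ᵀ * Matrix.fromCols Q₁ Q₂ = 1)
    (hQ' : Matrix.fromCols Q₁ Q₂ * (Matrix.fromCols Q₁ Q₂)ᵀ = 1)
    (hB : B = Q₁ * R)
    (lam : ℝ)
    (Xa : Matrix (Fin n) (Fin a) ℝ) (hXa : Xaᵀ * Xa = 1)
    (hker : Q₂ᵀ * (A - lam • 1) * Xa = 0)
    (X T : Matrix (Fin n) (Fin n) ℝ) (hX : Xᵀ * X = 1) (hX' : X * Xᵀ = 1)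
    (hXfirst : ∀ (i : Fin n) (j : Fin a), X i (Fin.castLE han j) = Xa i j)
    (hTfirst : ∀ (i : Fin n) (j : Fin a),
      T i (Fin.castLE han j) = if i = Fin.castLE han j then lam else 0)
    (hXT : Q₂ᵀ * (A * X - X * T) = 0) :
    a ≤ Module.finrank ℝ
      (LinearMap.ker
        (A + B * (R⁻¹ * Q₁ᵀ * (X * T * Xᵀ - A)) -
          lam • (1 : Matrix (Fin n) (Fin n) ℝ)).mulVecLin) := by
  -- Step 1: A + B F = X T Xᵀ
  have hRR : R * R⁻¹ = 1 := Matrix.mul_nonsing_inv R hR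
  have hsum : Q₁ * Q₁ᵀ + Q₂ * Q₂ᵀ = 1 := by
    have := hQ'
    rw [Matrix.transpose_fromCols, Matrix.fromCols_mul_fromRows] at this
    exact this
  have hQ2A : Q₂ᵀ * (X * T * Xᵀ - A) = 0 := by
    have h1 : Q₂ᵀ * (A * X) = Q₂ᵀ * (X * T) := by
      have := hXT
      rw [Matrix.mul_sub, sub_eq_zero] at this
      exact this
    have h2 : Q₂ᵀ * (X * T * Xᵀ) = Q₂ᵀ * A := by
      calc Q₂ᵀ * (X * T * Xᵀ) = Q₂ᵀ * (X * T) * Xᵀ := by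
            simp [Matrix.mul_assoc]
        _ = Q₂ᵀ * (A * X) * Xᵀ := by rw [h1]
        _ = Q₂ᵀ * A * (X * Xᵀ) := by simp [Matrix.mul_assoc]
        _ = Q₂ᵀ * A := by rw [hX', Matrix.mul_one]
    rw [Matrix.mul_sub, h2, sub_self]
  have hclosed : A + B * (R⁻¹ * Q₁ᵀ * (X * T * Xᵀ - A)) = X * T * Xᵀ := by
    have hBF : B * (R⁻¹ * Q₁ᵀ * (X * T * Xᵀ - A))
        = Q₁ * Q₁ᵀ * (X * T * Xᵀ - A) := by
      rw [hB]
      calc Q₁ * R * (R⁻¹ * Q₁ᵀ * (X * T * Xᵀ - A))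
          = Q₁ * (R * R⁻¹) * (Q₁ᵀ * (X * T * Xᵀ - A)) := by
            simp [Matrix.mul_assoc]
        _ = Q₁ * Q₁ᵀ * (X * T * Xᵀ - A) := by
            rw [hRR, Matrix.mul_one]; simp [Matrix.mul_assoc]
    rw [hBF]
    have : Q₁ * Q₁ᵀ * (X * T * Xᵀ - A)
        = (Q₁ * Q₁ᵀ + Q₂ * Q₂ᵀ) * (X * T * Xᵀ - A)
          - Q₂ * Q₂ᵀ * (X * T * Xᵀ - A) := by
      rw [Matrix.add_mul, add_sub_cancel_right]
    rw [this, hsum, Matrix.mul_assoc Q₂, hQ2A, Matrix.mul_zero, sub_zero,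
      Matrix.one_mul, add_sub_cancel]
  rw [hclosed]
  -- Step 2: (X T Xᵀ - λ I) Xa = 0
  set E : Matrix (Fin n) (Fin a) ℝ :=
    Matrix.of fun i j => if i = Fin.castLE han j then (1 : ℝ) else 0 with hE
  have hXE : X * E = Xa := by
    ext i j
    simp only [Matrix.mul_apply, hE, Matrix.of_apply, mul_ite, mul_one,
      mul_zero, Finset.sum_ite_eq', Finset.mem_univ, if_true]
    exact hXfirst i j
  have hTE : T * E = lam • E := by
    ext i j
    simp only [Matrix.mul_apply, hE, Matrix.of_apply, mul_ite, mul_one,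
      mul_zero, Finset.sum_ite_eq', Finset.mem_univ, if_true,
      Matrix.smul_apply, smul_ite, smul_eq_mul, mul_one, smul_zero]
    rw [hTfirst i j]
  have hMXa : (X * T * Xᵀ - lam • 1) * Xa = 0 := by
    have h1 : X * T * Xᵀ * Xa = lam • Xa := by
      calc X * T * Xᵀ * Xa = X * T * (Xᵀ * (X * E)) := by
            rw [hXE]; simp [Matrix.mul_assoc]
        _ = X * (T * E) := by
            rw [← Matrix.mul_assoc Xᵀ X E, hX, Matrix.one_mul,
              Matrix.mul_assoc]
        _ = lam • (X * E) := by rw [hTE, Matrix.mul_smul]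
        _ = lam • Xa := by rw [hXE]
    rw [Matrix.sub_mul, h1, Matrix.smul_mul, Matrix.one_mul, sub_self]
  -- Step 3: range Xa.mulVecLin ≤ ker, and Xa.mulVecLin is injective
  have hrange : LinearMap.range Xa.mulVecLin
      ≤ LinearMap.ker (X * T * Xᵀ - lam • (1 : Matrix (Fin n) (Fin n) ℝ)).mulVecLin := by
    rintro x ⟨c, rfl⟩
    simp only [LinearMap.mem_ker, Matrix.mulVecLin_apply]
    rw [Matrix.mulVec_mulVec, hMXa, Matrix.zero_mulVec]
  have hinj : Function.Injective Xa.mulVecLin := by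
    rw [← LinearMap.ker_eq_bot]
    rw [LinearMap.ker_eq_bot']
    intro c hc
    simp only [Matrix.mulVecLin_apply] at hc
    have : (Xaᵀ * Xa).mulVec c = Xaᵀ.mulVec (Xa.mulVec c) := by
      rw [Matrix.mulVec_mulVec]
    rw [hXa, hc, Matrix.mulVec_zero, Matrix.one_mulVec] at this
    exact this
  have hfr : Module.finrank ℝ (LinearMap.range Xa.mulVecLin) = a := by
    rw [LinearMap.finrank_range_of_inj hinj]
    simp
  calc a = Module.finrank ℝ (LinearMap.range Xa.mulVecLin) := hfr.symm
    _ ≤ _ := Submodule.finrank_mono hrange
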